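/- arXiv:1005.0308 — 3 statements merged into one kernel-verified Lean document; each statement's English description precedes it below -/
import Mathlib

section
/- Let Γ be a directed graph satisfying properties (F) and (EE). Then every vertex of Γ has a unique root. -/
def Subord {V : Type*} (E : V → V → Prop) (v w : V) : Prop :=
  Relation.ReflTransGen E v w

def IsRoot {V : Type*} (E : V → V → Prop) (v w : V) : Prop :=
  Subord E v w ∧ ∀ x, ¬ E w x

def PropF {V : Type*} (E : V → V → Prop) : Prop :=
  ∀ v : V, ∃ C : ℕ, ∀ (n : ℕ) (f : ℕ → V), f 0 = v →
    (∀ i < n, E (f i) (f (i + 1))) → n ≤ C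

/-- One step in the equivalence of edges emanating from `v`: both are edges from `v`,
and their terminal vertices have a common root. -/
def EdgeEquivStep {V : Type*} (E : V → V → Prop) (v w₁ w₂ : V) : Prop :=
  E v w₁ ∧ E v w₂ ∧ ∃ r, IsRoot E w₁ r ∧ IsRoot E w₂ r

/-- Property (EE): any two edges with a common initial vertex are equivalent,
i.e., connected by a chain of edges from that vertex in which consecutive
terminal vertices have a common root. -/
def PropEE {V : Type*} (E : V → V → Prop) : Prop :=
  ∀ v w₁ w₂ : V, E v w₁ → E v w₂ →
    Relation.ReflTransGen (EdgeEquivStep E v) w₁ w₂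

/-- Path-length bound at a vertex. -/
def Bnd {V : Type*} (E : V → V → Prop) (C : ℕ) (v : V) : Prop :=
  ∀ (n : ℕ) (f : ℕ → V), f 0 = v → (∀ i < n, E (f i) (f (i + 1))) → n ≤ C

lemma bnd_no_edge {V : Type*} {E : V → V → Prop} {v w : V}
    (h : Bnd E 0 v) (e : E v w) : False := by
  have := h 1 (fun i => if i = 0 then v else w) (by simp) ?_
  · omega
  · intro i hi
    interval_cases i
    simpa using e

lemma bnd_step {V : Type*} {E : V → V → Prop} {C : ℕ} {v w : V}
    (h : Bnd E (C + 1) v) (e : E v w) : Bnd E C w := by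
  intro n f h0 hf
  have := h (n + 1) (fun i => if i = 0 then v else f (i - 1)) (by simp) ?_
  · omega
  · intro i hi
    rcases Nat.eq_zero_or_pos i with h0i | h0i
    · subst h0i; simpa [h0] using e
    · obtain ⟨j, rfl⟩ := Nat.exists_eq_add_of_le' h0i
      simpa using hf j (by omega)

lemma root_exists {V : Type*} {E : V → V → Prop} :
    ∀ (C : ℕ) (v : V), Bnd E C v → ∃ r, IsRoot E v r := by
  intro C
  induction C with
  | zero =>
    intro v h
    exact ⟨v, Relation.ReflTransGen.refl, fun x hx => bnd_no_edge h hx⟩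
  | succ C ih =>
    intro v h
    by_cases he : ∃ w, E v w
    · obtain ⟨w, hw⟩ := he
      obtain ⟨r, hr₁, hr₂⟩ := ih w (bnd_step h hw)
      exact ⟨r, Relation.ReflTransGen.head hw hr₁, hr₂⟩
    · exact ⟨v, Relation.ReflTransGen.refl, fun x hx => he ⟨x, hx⟩⟩

lemma root_unique {V : Type*} {E : V → V → Prop} (hEE : PropEE E) :
    ∀ (C : ℕ) (v : V), Bnd E C v →
      ∀ r₁ r₂, IsRoot E v r₁ → IsRoot E v r₂ → r₁ = r₂ := by
  intro C
  induction C with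
  | zero =>
    intro v h r₁ r₂ h₁ h₂
    rcases (Relation.ReflTransGen.cases_head h₁.1) with rfl | ⟨w, hw, _⟩
    · rcases (Relation.ReflTransGen.cases_head h₂.1) with rfl | ⟨w, hw, _⟩
      · rfl
      · exact absurd hw (bnd_no_edge h)
    · exact absurd hw (bnd_no_edge h)
  | succ C ih =>
    intro v h r₁ r₂ h₁ h₂
    rcases (Relation.ReflTransGen.cases_head h₁.1) with rfl | ⟨w₁, hw₁, hsub₁⟩
    · rcases (Relation.ReflTransGen.cases_head h₂.1) with rfl | ⟨w, hw, _⟩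
      · rfl
      · exact absurd hw (h₁.2 w)
    · rcases (Relation.ReflTransGen.cases_head h₂.1) with rfl | ⟨w₂, hw₂, hsub₂⟩
      · exact absurd hw₁ (h₂.2 w₁)
      · -- r₁ is a root of w₁, r₂ is a root of w₂
        have hr₁ : IsRoot E w₁ r₁ := ⟨hsub₁, h₁.2⟩
        have hr₂ : IsRoot E w₂ r₂ := ⟨hsub₂, h₂.2⟩
        have hchain := hEE v w₁ w₂ hw₁ hw₂
        -- along the chain, roots agree with r₁
        have key : ∀ w, Relation.ReflTransGen (EdgeEquivStep E v) w₁ w →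
            ∀ s, IsRoot E w s → s = r₁ := by
          intro w hw
          induction hw with
          | refl =>
            intro s hs
            exact ih w₁ (bnd_step h hw₁) s r₁ hs hr₁
          | @tail b c hbc hstep ihc =>
            intro s hs
            obtain ⟨heb, hec, r, hrb, hrc⟩ := hstep
            have hs' : s = r := ih c (bnd_step h hec) s r hs hrc
            have hr' : r = r₁ := ihc r hrb
            rw [hs', hr']
        exact (key w₂ hchain r₂ hr₂).symm

/-- Diamond Lemma: properties (F) and (EE) imply every vertex has a unique root. -/
theorem unique_root_of_propF_propEE {V : Type*} (E : V → V → Prop)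
    (hF : PropF E) (hEE : PropEE E) : ∀ v : V, ∃! w : V, IsRoot E v w := by
  intro v
  obtain ⟨C, hC⟩ := hF v
  obtain ⟨r, hr⟩ := root_exists C v hC
  exact ⟨r, hr, fun s hs => root_unique hEE C v hC s r hs hr⟩
end

section
/- Let T be a monoid and C its center. Suppose every element of T can be written as a product t₁ ⋯ tₙ of prime elements, uniquely up to transpositions of adjacent factors tᵢ tᵢ₊₁ where at least one of tᵢ, tᵢ₊₁ is central. Let T̂ be the submonoid generated by the non-central primes and C₀ the submonoid generated by the central primes. Then every element of T factors uniquely as a product of an element of T̂ and an element of C₀, i.e., T ≅ T̂ × C₀ provided T̂ ∩ C₀ = {e}. -/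
def IsPrimeEl {M : Type*} [Monoid M] (p : M) : Prop :=
  p ≠ 1 ∧ ∀ a b : M, p = a * b → a = 1 ∨ b = 1

/-- One transposition of two adjacent factors, at least one of which is central. -/
def SwapStep {T : Type*} [Monoid T] (l₁ l₂ : List T) : Prop :=
  ∃ (l l' : List T) (a b : T), (a ∈ Submonoid.center T ∨ b ∈ Submonoid.center T) ∧
    l₁ = l ++ a :: b :: l' ∧ l₂ = l ++ b :: a :: l'

open scoped Classical

private lemma swap_inv {T : Type*} [Monoid T] {l₁ l₂ : List T} (h : SwapStep l₁ l₂) :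
    (l₁.filter fun x => x ∉ Submonoid.center T).prod
      = (l₂.filter fun x => x ∉ Submonoid.center T).prod ∧
    (l₁.filter fun x => x ∈ Submonoid.center T).prod
      = (l₂.filter fun x => x ∈ Submonoid.center T).prod := by
  obtain ⟨l, l', a, b, hc, rfl, rfl⟩ := h
  by_cases ha : a ∈ Submonoid.center T <;> by_cases hb : b ∈ Submonoid.center T
  · have hab : a * b = b * a := Submonoid.mem_center_iff.mp hb a
    have key : ∀ Y : T, a * (b * Y) = b * (a * Y) := fun Y => by
      rw [← mul_assoc, hab, mul_assoc]
    constructor <;> simp [List.filter_append, List.filter_cons, ha, hb, mul_assoc, key]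
  · constructor <;> simp [List.filter_append, List.filter_cons, ha, hb]
  · constructor <;> simp [List.filter_append, List.filter_cons, ha, hb]
  · tauto

private lemma rtg_inv {T : Type*} [Monoid T] {l₁ l₂ : List T}
    (h : Relation.ReflTransGen SwapStep l₁ l₂) :
    (l₁.filter fun x => x ∉ Submonoid.center T).prod
      = (l₂.filter fun x => x ∉ Submonoid.center T).prod ∧
    (l₁.filter fun x => x ∈ Submonoid.center T).prod
      = (l₂.filter fun x => x ∈ Submonoid.center T).prod := by
  induction h with
  | refl => exact ⟨rfl, rfl⟩
  | tail _ hstep ih => exact ⟨ih.1.trans (swap_inv hstep).1, ih.2.trans (swap_inv hstep).2⟩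

private lemma split_prod {T : Type*} [Monoid T] (l : List T) :
    l.prod = (l.filter fun x => x ∉ Submonoid.center T).prod
      * (l.filter fun x => x ∈ Submonoid.center T).prod := by
  induction l with
  | nil => simp
  | cons a l ih =>
    by_cases ha : a ∈ Submonoid.center T
    · have hc : ∀ x : T, x * a = a * x := fun x => Submonoid.mem_center_iff.mp ha x
      simp only [List.prod_cons, ih]
      simp [List.filter_cons, ha]
      conv_rhs => rw [← mul_assoc, hc]
      rw [mul_assoc]
    · simp only [List.prod_cons, List.filter_cons, ha, ih]
      simp [ha, mul_assoc]

/-- If every element of `T` is a product of primes, uniquely up to transpositions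
of adjacent factors one of which is central, then (assuming the submonoid `T̂`
generated by the non-central primes meets the submonoid `C₀` generated by the
central primes trivially) every element of `T` factors uniquely as an element of
`T̂` times an element of `C₀`. -/
theorem unique_central_factorization {T : Type*} [Monoid T]
    (hex : ∀ t : T, ∃ l : List T, (∀ p ∈ l, IsPrimeEl p) ∧ l.prod = t)
    (huniq : ∀ l₁ l₂ : List T, (∀ p ∈ l₁, IsPrimeEl p) → (∀ p ∈ l₂, IsPrimeEl p) →
      l₁.prod = l₂.prod → Relation.ReflTransGen SwapStep l₁ l₂)
    (htriv : Submonoid.closure {p : T | IsPrimeEl p ∧ p ∉ Submonoid.center T} ⊓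
        Submonoid.closure {p : T | IsPrimeEl p ∧ p ∈ Submonoid.center T} = ⊥) :
    ∀ t : T, ∃! ab : T × T,
      ab.1 ∈ Submonoid.closure {p : T | IsPrimeEl p ∧ p ∉ Submonoid.center T} ∧
      ab.2 ∈ Submonoid.closure {p : T | IsPrimeEl p ∧ p ∈ Submonoid.center T} ∧
      t = ab.1 * ab.2 := by
  intro t
  obtain ⟨l, hl, hlp⟩ := hex t
  refine ⟨((l.filter fun x => x ∉ Submonoid.center T).prod,
           (l.filter fun x => x ∈ Submonoid.center T).prod), ⟨?_, ?_, ?_⟩, ?_⟩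
  · exact Submonoid.list_prod_mem _ fun x hx => Submonoid.subset_closure
      ⟨hl x (List.mem_of_mem_filter hx), by simpa using (List.of_mem_filter hx)⟩
  · exact Submonoid.list_prod_mem _ fun x hx => Submonoid.subset_closure
      ⟨hl x (List.mem_of_mem_filter hx), by simpa using (List.of_mem_filter hx)⟩
  · rw [← hlp]; exact split_prod l
  · rintro ⟨a, b⟩ ⟨ha, hb, rfl⟩
    obtain ⟨la, hla, hlap⟩ := Submonoid.exists_list_of_mem_closure ha
    obtain ⟨lb, hlb, hlbp⟩ := Submonoid.exists_list_of_mem_closure hb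
    have hprimes : ∀ p ∈ la ++ lb, IsPrimeEl p := by
      intro p hp
      rcases List.mem_append.mp hp with h | h
      · exact (hla p h).1
      · exact (hlb p h).1
    have hprod : (la ++ lb).prod = l.prod := by
      rw [List.prod_append, hlap, hlbp, hlp]
    have hrel := huniq (la ++ lb) l hprimes hl hprod
    have hinv := rtg_inv hrel
    have hfa : (la ++ lb).filter (fun x => x ∉ Submonoid.center T) = la := by
      rw [List.filter_append]
      rw [List.filter_eq_self.mpr (fun x hx => by simpa using (hla x hx).2),
        List.filter_eq_nil_iff.mpr (fun x hx => by simpa using (hlb x hx).2), List.append_nil]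
    have hfb : (la ++ lb).filter (fun x => x ∈ Submonoid.center T) = lb := by
      rw [List.filter_append]
      rw [List.filter_eq_nil_iff.mpr (fun x hx => by simpa using (hla x hx).2),
        List.filter_eq_self.mpr (fun x hx => by simpa using (hlb x hx).2), List.nil_append]
    have h1 := hinv.1; have h2 := hinv.2
    rw [hfa, hlap] at h1
    rw [hfb, hlbp] at h2
    exact Prod.ext h1 h2
end

section
/- Let T be a monoid in which every nonidentity element is a product of primes, and suppose prime factorizations are unique up to moving central prime factors past arbitrary factors (i.e., up to relations t′t″ = t″t′ where t′ or t″ is central). If no prime of T is central, then T is a free monoid on its set of primes. -/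
lemma no_swap_from_primes {T : Type*} [Monoid T]
    (hnc : ∀ p : T, IsPrimeEl p → p ∉ Submonoid.center T)
    {l₁ l₂ : List T} (h₁ : ∀ p ∈ l₁, IsPrimeEl p)
    (h : Relation.ReflTransGen SwapStep l₁ l₂) : l₁ = l₂ := by
  rcases h.cases_head with rfl | ⟨m, hm, _⟩
  · rfl
  · rcases hm with ⟨l, l', a, b, hc, he₁, _⟩
    exfalso
    rcases hc with hca | hcb
    · exact hnc a (h₁ a (by simp [he₁])) hca
    · exact hnc b (h₁ b (by simp [he₁])) hcb

/-- If every nonidentity element is a product of primes, prime factorizations are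
unique up to moving central factors past adjacent factors, and no prime is
central, then the monoid is free on its primes: the map sending a word in the
primes to its product is bijective. -/
theorem free_monoid_on_primes {T : Type*} [Monoid T]
    (hex : ∀ t : T, t ≠ 1 →
      ∃ l : List T, l ≠ [] ∧ (∀ p ∈ l, IsPrimeEl p) ∧ l.prod = t)
    (huniq : ∀ l₁ l₂ : List T, (∀ p ∈ l₁, IsPrimeEl p) → (∀ p ∈ l₂, IsPrimeEl p) →
      l₁.prod = l₂.prod → Relation.ReflTransGen SwapStep l₁ l₂)
    (hnc : ∀ p : T, IsPrimeEl p → p ∉ Submonoid.center T) :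
    Function.Bijective
      (fun l : List {p : T // IsPrimeEl p} => (l.map Subtype.val).prod) := by
  constructor
  · intro l₁ l₂ h
    have h₁ : ∀ p ∈ l₁.map Subtype.val, IsPrimeEl p := by
      intro p hp; rcases List.mem_map.mp hp with ⟨q, _, rfl⟩; exact q.2
    have h₂ : ∀ p ∈ l₂.map Subtype.val, IsPrimeEl p := by
      intro p hp; rcases List.mem_map.mp hp with ⟨q, _, rfl⟩; exact q.2
    have := no_swap_from_primes hnc h₁ (huniq _ _ h₁ h₂ h)
    exact List.map_injective_iff.mpr Subtype.val_injective this
  · intro t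
    by_cases ht : t = 1
    · exact ⟨[], by simp [ht]⟩
    · rcases hex t ht with ⟨l, _, hp, hprod⟩
      refine ⟨l.attach.map (fun x => ⟨x.1, hp x.1 x.2⟩), ?_⟩
      simp only [List.map_map]
      have : (l.attach.map ((Subtype.val : {p : T // IsPrimeEl p} → T) ∘
          (fun x => (⟨x.1, hp x.1 x.2⟩ : {p : T // IsPrimeEl p})))) = l := by
        simp [Function.comp]
      rw [this, hprod]
end
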